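/- Let $r, m$ and $a_1,\ldots,a_r,b_1,\ldots,b_r$ be positive integers, and let $X=\prod_{i=1}^r K[a_i,b_i]$. Writing $\mathrm{CL}(t)$ for the set of cliques of order $t$ in $X$, one has $(m+1)\,|\mathrm{CL}(m+1)| = |\mathrm{CL}(m)|\cdot\prod_{i=1}^r \mathcal{S}_m(a_i,b_i)$. -/

import Mathlib

/-- The balanced complete `b`-partite graph with partite sets of size `a`. -/
def balancedMultipartite (a b : ℕ) : SimpleGraph (Fin b × Fin a) where
  Adj u v := u.1 ≠ v.1
  symm := ⟨fun _ _ h => h.symm⟩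
  loopless := ⟨fun _ h => h rfl⟩

/-- The direct (tensor) product of a nonempty family of graphs. -/
def directProd {r : ℕ} (hr : 0 < r) {V : Fin r → Type*}
    (G : ∀ i, SimpleGraph (V i)) : SimpleGraph (∀ i, V i) where
  Adj f g := ∀ i, (G i).Adj (f i) (g i)
  symm := ⟨fun _ _ h i => (h i).symm⟩
  loopless := ⟨fun _ h => (G ⟨0, hr⟩).irrefl (h ⟨0, hr⟩)⟩

/-- Writing `CL(t)` for the set of cliques of order `t` in `X = ∏ K[aᵢ,bᵢ]`,
one has `(m+1)|CL(m+1)| = |CL(m)| · ∏ᵢ 𝒮_m(aᵢ,bᵢ)`, where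
`𝒮_m(x,y) = max{x(y-m),0}` (truncated ℕ-subtraction). -/
theorem cliqueCount_recursion (r m : ℕ) (hr : 0 < r) (hm : 0 < m)
    (a b : Fin r → ℕ) (ha : ∀ i, 0 < a i) (hb : ∀ i, 0 < b i) :
    (m + 1) *
      {s : Finset (∀ i : Fin r, Fin (b i) × Fin (a i)) |
        (directProd hr (fun i => balancedMultipartite (a i) (b i))).IsNClique (m + 1) s}.ncard
    = {s : Finset (∀ i : Fin r, Fin (b i) × Fin (a i)) |
        (directProd hr (fun i => balancedMultipartite (a i) (b i))).IsNClique m s}.ncard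
      * ∏ i : Fin r, a i * (b i - m) := by
  classical
  set G := directProd hr (fun i => balancedMultipartite (a i) (b i)) with hG
  have hAdj : ∀ f g, G.Adj f g ↔ ∀ i, (f i).1 ≠ (g i).1 := fun f g => Iff.rfl
  -- convert ncards to cliqueFinset cards
  have hset : ∀ n : ℕ, {s : Finset (∀ i : Fin r, Fin (b i) × Fin (a i)) |
      G.IsNClique n s}.ncard = (G.cliqueFinset n).card := by
    intro n
    rw [← Set.ncard_coe_finset]
    congr 1
    ext s
    simp [SimpleGraph.mem_cliqueFinset_iff]
  rw [hset, hset]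
  -- the extension set of a clique
  set ext : Finset (∀ i : Fin r, Fin (b i) × Fin (a i)) →
      Finset (∀ i : Fin r, Fin (b i) × Fin (a i)) :=
    fun t => Finset.univ.filter (fun v => ∀ u ∈ t, G.Adj v u) with hext
  have hmemext : ∀ t v, v ∈ ext t ↔ ∀ u ∈ t, G.Adj v u := by
    intro t v; simp [hext]
  -- double counting bijection
  have hbij : ((G.cliqueFinset (m+1)).sigma fun s => s).card
      = ((G.cliqueFinset m).sigma fun t => ext t).card := by
    apply Finset.card_bij (fun p _ => (⟨p.1.erase p.2, p.2⟩ :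
      Σ _ : Finset (∀ i : Fin r, Fin (b i) × Fin (a i)),
        (∀ i : Fin r, Fin (b i) × Fin (a i))))
    · rintro ⟨s, v⟩ hp
      rw [Finset.mem_sigma] at hp ⊢
      obtain ⟨hs, hv⟩ := hp
      rw [SimpleGraph.mem_cliqueFinset_iff] at hs
      constructor
      · rw [SimpleGraph.mem_cliqueFinset_iff]
        refine ⟨hs.1.subset (Finset.erase_subset _ _), ?_⟩
        rw [Finset.card_erase_of_mem hv, hs.2]
        omega
      · rw [hmemext]
        intro u hu
        rw [Finset.mem_erase] at hu
        exact hs.1 hv (Finset.mem_coe.mpr hu.2) (fun h => hu.1 h.symm)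
    · rintro ⟨s, v⟩ hp ⟨s', v'⟩ hp' h
      rw [Finset.mem_sigma] at hp hp'
      simp only [Sigma.mk.inj_iff] at h
      obtain ⟨h1, h2⟩ := h
      have hv : v = v' := eq_of_heq h2
      subst hv
      have : s = s' := by
        rw [← Finset.insert_erase (show v ∈ s from hp.2),
          ← Finset.insert_erase (show v ∈ s' from hp'.2), h1]
      simp [this]
    · rintro ⟨t, v⟩ hp
      rw [Finset.mem_sigma] at hp
      obtain ⟨ht, hv⟩ := hp
      rw [SimpleGraph.mem_cliqueFinset_iff] at ht
      rw [hmemext] at hv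
      have hvt : v ∉ t := fun h => G.loopless.irrefl v (hv v h)
      refine ⟨⟨insert v t, v⟩, ?_, ?_⟩
      · rw [Finset.mem_sigma]
        constructor
        · rw [SimpleGraph.mem_cliqueFinset_iff]
          constructor
          · show G.IsClique ↑(insert v t)
            rw [Finset.coe_insert]
            exact ht.1.insert (fun u hu _ => hv u hu)
          · show (insert v t).card = m + 1
            rw [Finset.card_insert_of_notMem hvt, ht.2]
        · exact Finset.mem_insert_self _ _
      · simp [Finset.erase_insert hvt]
  rw [Finset.card_sigma, Finset.card_sigma] at hbij
  -- LHS count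
  have hL : ∑ s ∈ G.cliqueFinset (m+1), s.card = (m + 1) * (G.cliqueFinset (m+1)).card := by
    rw [Finset.sum_congr rfl (fun s hs => (SimpleGraph.mem_cliqueFinset_iff.mp hs).2),
      Finset.sum_const, smul_eq_mul, mul_comm]
  -- RHS count: each m-clique has exactly ∏ aᵢ(bᵢ-m) extensions
  have hR : ∀ t ∈ G.cliqueFinset m, (ext t).card = ∏ i, a i * (b i - m) := by
    intro t ht
    rw [SimpleGraph.mem_cliqueFinset_iff] at ht
    have himg : ∀ i, (t.image (fun u => (u i).1)).card = m := by
      intro i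
      rw [Finset.card_image_of_injOn, ht.2]
      intro u hu u' hu' h
      by_contra hne
      exact ht.1 (Finset.mem_coe.mpr hu) (Finset.mem_coe.mpr hu') hne i h
    have hpi : ext t = Fintype.piFinset
        (fun i => ((t.image (fun u => (u i).1))ᶜ ×ˢ (Finset.univ : Finset (Fin (a i))))) := by
      ext v
      rw [hmemext, Fintype.mem_piFinset]
      simp only [Finset.mem_product, Finset.mem_compl, Finset.mem_image, Finset.mem_univ,
        and_true, not_exists, not_and]
      constructor
      · intro h i u hu hq
        exact (h u hu i) hq.symm
      · intro h u hu i hq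
        exact h i u hu hq.symm
    rw [hpi, Fintype.card_piFinset]
    refine Finset.prod_congr rfl (fun i _ => ?_)
    rw [Finset.card_product, Finset.card_compl, himg, Finset.card_univ,
      Fintype.card_fin, Fintype.card_fin, mul_comm]
  rw [Finset.sum_congr rfl hR, Finset.sum_const, smul_eq_mul] at hbij
  rw [← hL, hbij]
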